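/- arXiv:2105.09631 — 2 statements merged into one kernel-verified Lean document; each statement's English description precedes it below -/
import Mathlib

section
/- Setting z = x + y, for all w₁, w₂ ∈ 𝔥 one has w₁z ⊛̃ w₂z = -(w₁ * w₂)z. -/
open scoped BigOperators

abbrev Ltr := Fin 2

/-- `𝔥 = ℚ⟨x,y⟩`, realized as the monoid algebra of the free monoid on two letters. -/
abbrev H := MonoidAlgebra ℚ (FreeMonoid Ltr)

/-- The word `u₁⋯u_m` as an element of `𝔥`. -/
noncomputable def wrd (l : List Ltr) : H := MonoidAlgebra.of ℚ (FreeMonoid Ltr) (FreeMonoid.ofList l)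

/-- The generator `x`. -/
noncomputable def Xh : H := wrd [0]
/-- The generator `y`. -/
noncomputable def Yh : H := wrd [1]

/-- `e₀ = x`, `e₁ = -y`. -/
noncomputable def eH (a : Ltr) : H := if a = 0 then Xh else -Yh

/-- The product `e_{a₁}⋯e_{a_m} ∈ 𝔥` for an `e`-word. -/
noncomputable def ew (l : List Ltr) : H := ((-1 : ℚ) ^ (l.count 1)) • wrd l

/-- The symmetric harmonic product on basis `e`-words:
`e_a ⊛̃ e_{b₁}⋯e_{bₙ} = e_{b₁}⋯e_{bₙ} ⊛̃ e_a = e_{ab₁}⋯e_{abₙ}` and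
`e_a w₁ ⊛̃ e_b w₂ = e_{ab}(w₁ ⊛̃ e_b w₂) + e_{ab}(e_a w₁ ⊛̃ w₂) - e_{ab}e₀(w₁ ⊛̃ w₂)`. -/
noncomputable def mstE : List Ltr → List Ltr → H
  | [a], b :: bs => ew ((b :: bs).map (fun c => a * c))
  | a :: a' :: as, [b] => ew ((a :: a' :: as).map (fun c => c * b))
  | a :: a' :: as, b :: b' :: bs =>
      eH (a * b) * mstE (a' :: as) (b :: b' :: bs)
      + eH (a * b) * mstE (a :: a' :: as) (b' :: bs)
      - eH (a * b) * Xh * mstE (a' :: as) (b' :: bs)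
  | _, _ => 0
termination_by l₁ l₂ => l₁.length + l₂.length

/-- The symmetric harmonic product `⊛̃ : 𝔥' ⊗ 𝔥' → 𝔥'`, extended bilinearly
(using that the word `u₁⋯u_m` equals `(-1)^{#{i : uᵢ = y}} e_{u₁}⋯e_{u_m}`). -/
noncomputable def mst (f g : H) : H :=
  f.coeff.sum fun u cu => g.coeff.sum fun v cv =>
    (cu * cv * (-1 : ℚ) ^ ((FreeMonoid.toList u).count 1)
      * (-1 : ℚ) ^ ((FreeMonoid.toList v).count 1)) •
      mstE (FreeMonoid.toList u) (FreeMonoid.toList v)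

/-- Letter produced when stuffling letters `u, v`: `y` iff both are `y`, else `x`. -/
noncomputable def ellt (a b : Ltr) : H := if a = 1 ∧ b = 1 then Yh else Xh
def cc1 (a b : Ltr) : ℚ := if a = 1 ∧ b = 0 then -1 else 1
def cc2 (a b : Ltr) : ℚ := if a = 0 ∧ b = 1 then -1 else 1
def cc3 (a b : Ltr) : ℚ := if a = 0 ∧ b = 0 then -1 else 1

/-- The harmonic (stuffle) product on words of `𝔥`: on `𝔥¹` it is Hoffman's harmonic
product defined by `w*1 = 1*w = w` and
`z_k w₁ * z_l w₂ = z_k(w₁ * z_l w₂) + z_l(z_k w₁ * w₂) + z_{k+l}(w₁ * w₂)` with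
`z_n = yx^{n-1}`, extended to all of `𝔥` (compatibly, via `w₁e₁ ⊛̃ w₂e₁ = (w₁*w₂)e₁`). -/
noncomputable def starW : List Ltr → List Ltr → H
  | [], v => wrd v
  | u, [] => wrd u
  | a :: u, b :: v =>
      cc1 a b • (ellt a b * starW u (b :: v)) + cc2 a b • (ellt a b * starW (a :: u) v)
      + cc3 a b • (ellt a b * Xh * starW u v)
termination_by u v => u.length + v.length

/-- The harmonic product `*` on `𝔥`, extended bilinearly. -/
noncomputable def star (f g : H) : H :=
  f.coeff.sum fun u cu => g.coeff.sum fun v cv => (cu * cv) • starW u.toList v.toList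

set_option linter.unreachableTactic false
set_option linter.unusedTactic false

-- test basic lemmas
lemma wrd_mul (u v : List Ltr) : wrd u * wrd v = wrd (u ++ v) := by
  simp [wrd, ← map_mul]

lemma wrd_toList (a : FreeMonoid Ltr) : wrd (FreeMonoid.toList a) = MonoidAlgebra.single a 1 := by
  simp [wrd, MonoidAlgebra.of_apply]

lemma mst_wrd (u v : List Ltr) : mst (wrd u) (wrd v)
    = (((-1:ℚ) ^ (u.count 1)) * ((-1:ℚ) ^ (v.count 1))) • mstE u v := by
  unfold mst wrd
  rw [MonoidAlgebra.of_apply, MonoidAlgebra.of_apply]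
  rw [MonoidAlgebra.coeff_single, MonoidAlgebra.coeff_single, Finsupp.sum_single_index, Finsupp.sum_single_index] <;> simp
lemma mst_zero_left (g : H) : mst 0 g = 0 := by unfold mst; simp

lemma mst_zero_right (f : H) : mst f 0 = 0 := by unfold mst; simp

lemma mst_add_left (f f' g : H) : mst (f + f') g = mst f g + mst f' g := by
  unfold mst
  rw [MonoidAlgebra.coeff_add, Finsupp.sum_add_index']
  · intro u; simp
  · intro u c c'
    simp only [add_mul, add_smul, Finsupp.sum_add]

lemma mst_add_right (f g g' : H) : mst f (g + g') = mst f g + mst f g' := by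
  unfold mst
  rw [← Finsupp.sum_add]
  congr 1; ext u cu
  rw [MonoidAlgebra.coeff_add, Finsupp.sum_add_index']
  · intro v; simp
  · intro v c c'
    simp only [mul_add, add_mul, add_smul]

lemma mst_smul_left (c : ℚ) (f g : H) : mst (c • f) g = c • mst f g := by
  unfold mst
  rw [MonoidAlgebra.coeff_smul, Finsupp.sum_smul_index (by intro u; simp), Finsupp.smul_sum]
  refine Finsupp.sum_congr ?_
  intro u _
  rw [Finsupp.smul_sum]
  refine Finsupp.sum_congr ?_
  intro v _
  rw [smul_smul]; ring_nf

lemma mst_smul_right (c : ℚ) (f g : H) : mst f (c • g) = c • mst f g := by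
  unfold mst
  rw [Finsupp.smul_sum]
  refine Finsupp.sum_congr ?_
  intro u _
  rw [MonoidAlgebra.coeff_smul, Finsupp.sum_smul_index (by intro v; simp), Finsupp.smul_sum]
  refine Finsupp.sum_congr ?_
  intro v _
  rw [smul_smul]; ring_nf

lemma star_zero_left (g : H) : star 0 g = 0 := by unfold _root_.star; simp
lemma star_zero_right (f : H) : star f 0 = 0 := by unfold _root_.star; simp

lemma star_add_left (f f' g : H) : _root_.star (f + f') g = _root_.star f g + star f' g := by
  unfold _root_.star
  rw [MonoidAlgebra.coeff_add, Finsupp.sum_add_index']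
  · intro u; simp
  · intro u c c'
    simp only [add_mul, add_smul, Finsupp.sum_add]

lemma star_add_right (f g g' : H) : star f (g + g') = _root_.star f g + star f g' := by
  unfold _root_.star
  rw [← Finsupp.sum_add]
  congr 1; ext u cu
  rw [MonoidAlgebra.coeff_add, Finsupp.sum_add_index']
  · intro v; simp
  · intro v c c'
    simp only [mul_add, add_smul]

lemma star_single_single (a b : FreeMonoid Ltr) (c d : ℚ) :
    _root_.star (MonoidAlgebra.single a c) (MonoidAlgebra.single b d)
      = (c * d) • starW a.toList b.toList := by
  unfold _root_.star
  rw [MonoidAlgebra.coeff_single, MonoidAlgebra.coeff_single, Finsupp.sum_single_index, Finsupp.sum_single_index] <;> simp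
lemma mstE_one (a b : Ltr) (bs : List Ltr) :
    mstE [a] (b :: bs) = ew ((b :: bs).map (fun c => a * c)) := by
  rw [mstE]

lemma mstE_two (a b : Ltr) (p : List Ltr) (hp : p ≠ []) :
    mstE (a :: p) [b] = ew ((a :: p).map (fun c => c * b)) := by
  obtain ⟨a', as, rfl⟩ := List.exists_cons_of_ne_nil hp
  rw [mstE]

lemma mstE_cons_cons (a b : Ltr) (p q : List Ltr) (hp : p ≠ []) (hq : q ≠ []) :
    mstE (a :: p) (b :: q)
      = eH (a * b) * mstE p (b :: q) + eH (a * b) * mstE (a :: p) q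
        - eH (a * b) * Xh * mstE p q := by
  obtain ⟨a', as, rfl⟩ := List.exists_cons_of_ne_nil hp
  obtain ⟨b', bs, rfl⟩ := List.exists_cons_of_ne_nil hq
  rw [mstE]

lemma starW_nil_left (v : List Ltr) : starW [] v = wrd v := by rw [starW]

lemma starW_nil_right (u : List Ltr) : starW u [] = wrd u := by
  cases u with
  | nil => rw [starW]
  | cons a u => rw [starW]; simp

lemma starW_cons_cons (a b : Ltr) (u v : List Ltr) :
    starW (a :: u) (b :: v)
      = cc1 a b • (ellt a b * starW u (b :: v)) + cc2 a b • (ellt a b * starW (a :: u) v)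
        + cc3 a b • (ellt a b * Xh * starW u v) := by
  rw [starW]
noncomputable def Dm (p q : List Ltr) : H :=
  mstE (p ++ [0]) (q ++ [0]) - mstE (p ++ [0]) (q ++ [1])
  - mstE (p ++ [1]) (q ++ [0]) + mstE (p ++ [1]) (q ++ [1])

def eps (p : List Ltr) : ℚ := (-1) ^ (p.count 1)

lemma eps_sq (p : List Ltr) : eps p * eps p = 1 := by
  rw [eps, ← mul_pow]; norm_num

lemma eps_cons (a : Ltr) (p : List Ltr) :
    eps (a :: p) = (if a = 1 then -1 else 1) * eps p := by
  fin_cases a <;> simp [eps, List.count_cons, pow_succ, mul_comm]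

lemma mst_expand (p q : List Ltr) :
    mst (wrd p * (Xh + Yh)) (wrd q * (Xh + Yh)) = (eps p * eps q) • Dm p q := by
  rw [show Xh = wrd [0] from rfl, show Yh = wrd [1] from rfl]
  rw [mul_add, mul_add, wrd_mul, wrd_mul, wrd_mul, wrd_mul,
     mst_add_left, mst_add_right, mst_add_right, mst_wrd, mst_wrd, mst_wrd, mst_wrd]
  simp only [Dm, eps, List.count_append, List.count_singleton, List.count_cons,
    List.count_nil, pow_add, pow_zero, pow_one, mul_one,
    (by decide : ((0:Ltr) == 1) = false), (by decide : ((1:Ltr) == 1) = true),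
    if_true, if_false, Bool.false_eq_true, Bool.true_eq_false]
  module
lemma zmul (c : Ltr) : (0:Ltr) * c = 0 := by fin_cases c <;> decide
lemma omul (c : Ltr) : (1:Ltr) * c = c := by fin_cases c <;> decide
lemma mulz (c : Ltr) : c * (0:Ltr) = 0 := by fin_cases c <;> decide
lemma mulo (c : Ltr) : c * (1:Ltr) = c := by fin_cases c <;> decide

lemma wrd_nil : wrd [] = 1 := by
  simp [wrd]
  rfl

lemma keyD_nil_nil : (eps [] * eps []) • Dm [] [] = -(starW [] [] * (Xh + Yh)) := by
  simp only [Dm, List.nil_append, starW_nil_left, wrd_nil, one_mul, eps, List.count_nil,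
    pow_zero, mstE_one, List.map_cons, List.map_nil, zmul, omul, ew, List.count_cons,
    List.count_singleton]
  norm_num
  rw [show Xh = wrd [0] from rfl, show Yh = wrd [1] from rfl]
  module
lemma keyD_nil_cons (b : Ltr) (q : List Ltr) :
    (eps [] * eps (b :: q)) • Dm [] (b :: q) = -(starW [] (b :: q) * (Xh + Yh)) := by
  simp only [Dm, List.nil_append, List.cons_append, mstE_one, List.map_cons, List.map_append,
    List.map_nil, zmul, omul, List.map_id', List.map_const', starW_nil_left]
  rw [show Xh = wrd [0] from rfl, show Yh = wrd [1] from rfl, mul_add, wrd_mul, wrd_mul]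
  have hc0 : (b :: (q ++ [0])).count 1 = (b :: q).count 1 := by
    simp [List.count_cons, List.count_append]
  have hc1 : (b :: (q ++ [1])).count 1 = (b :: q).count 1 + 1 := by
    simp [List.count_cons, List.count_append]; omega
  have he : eps (b :: q) * eps (b :: q) = 1 := eps_sq _
  simp only [ew, hc0, hc1, pow_succ, eps, List.count_nil, pow_zero, one_mul,
    List.cons_append] at he ⊢
  generalize ((-1:ℚ) ^ (b :: q).count 1) = e at he ⊢
  match_scalars <;> first | linear_combination -he | linear_combination (-2:ℚ)*he | linear_combination he | linear_combination (2:ℚ)*he | ring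
lemma keyD_cons_nil (a : Ltr) (p : List Ltr) :
    (eps (a :: p) * eps []) • Dm (a :: p) [] = -(starW (a :: p) [] * (Xh + Yh)) := by
  have h0 : ∀ s : Ltr, mstE (a :: (p ++ [s])) [0]
      = ew ((a :: (p ++ [s])).map (fun c => c * 0)) := fun s =>
    mstE_two a 0 (p ++ [s]) (by simp)
  have h1 : ∀ s : Ltr, mstE (a :: (p ++ [s])) [1]
      = ew ((a :: (p ++ [s])).map (fun c => c * 1)) := fun s =>
    mstE_two a 1 (p ++ [s]) (by simp)
  simp only [Dm, List.nil_append, List.cons_append, h0, h1, List.map_cons, List.map_append,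
    List.map_nil, mulz, mulo, List.map_id', List.map_const', starW_nil_right]
  rw [show Xh = wrd [0] from rfl, show Yh = wrd [1] from rfl, mul_add, wrd_mul, wrd_mul]
  have hc0 : (a :: (p ++ [0])).count 1 = (a :: p).count 1 := by
    simp [List.count_cons, List.count_append]
  have hc1 : (a :: (p ++ [1])).count 1 = (a :: p).count 1 + 1 := by
    simp [List.count_cons, List.count_append]; omega
  have he : eps (a :: p) * eps (a :: p) = 1 := eps_sq _
  simp only [ew, hc0, hc1, pow_succ, eps, List.count_nil, pow_zero, mul_one,
    List.cons_append] at he ⊢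
  generalize ((-1:ℚ) ^ (a :: p).count 1) = e at he ⊢
  match_scalars <;> first | linear_combination -he | linear_combination (-2:ℚ)*he | linear_combination he | linear_combination (2:ℚ)*he | ring
lemma Dm_cons_cons (a b : Ltr) (p q : List Ltr) :
    Dm (a :: p) (b :: q)
      = eH (a * b) * Dm p (b :: q) + eH (a * b) * Dm (a :: p) q
        - eH (a * b) * Xh * Dm p q := by
  have h : ∀ s t : Ltr, mstE (a :: (p ++ [s])) (b :: (q ++ [t]))
      = eH (a * b) * mstE (p ++ [s]) (b :: (q ++ [t]))
        + eH (a * b) * mstE (a :: (p ++ [s])) (q ++ [t])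
        - eH (a * b) * Xh * mstE (p ++ [s]) (q ++ [t]) := fun s t =>
    mstE_cons_cons a b _ _ (by simp) (by simp)
  simp only [Dm, List.cons_append, h, mul_add, mul_sub]
  abel
lemma keyD_step (a b : Ltr) (p q : List Ltr)
    (ih1 : (eps p * eps (b :: q)) • Dm p (b :: q) = -(starW p (b :: q) * (Xh + Yh)))
    (ih2 : (eps (a :: p) * eps q) • Dm (a :: p) q = -(starW (a :: p) q * (Xh + Yh)))
    (ih3 : (eps p * eps q) • Dm p q = -(starW p q * (Xh + Yh))) :
    (eps (a :: p) * eps (b :: q)) • Dm (a :: p) (b :: q)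
      = -(starW (a :: p) (b :: q) * (Xh + Yh)) := by
  have sq : ∀ l : List Ltr, eps l * eps l = 1 := eps_sq
  have d1 : Dm p (b :: q) = (eps p * eps (b :: q)) • (-(starW p (b :: q) * (Xh + Yh))) := by
    rw [← ih1, smul_smul, mul_mul_mul_comm, sq, sq, one_mul, one_smul]
  have d2 : Dm (a :: p) q = (eps (a :: p) * eps q) • (-(starW (a :: p) q * (Xh + Yh))) := by
    rw [← ih2, smul_smul, mul_mul_mul_comm, sq, sq, one_mul, one_smul]
  have d3 : Dm p q = (eps p * eps q) • (-(starW p q * (Xh + Yh))) := by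
    rw [← ih3, smul_smul, mul_mul_mul_comm, sq, sq, one_mul, one_smul]
  have hep := eps_sq p
  have heq := eps_sq q
  rw [Dm_cons_cons, d1, d2, d3, starW_cons_cons, eps_cons a p, eps_cons b q]
  fin_cases a <;> fin_cases b <;>
    simp only [Fin.mk_zero, Fin.mk_one, show ((0:Ltr) = 1) = False by simp, show ((1:Ltr) = 0) = False by simp, show ((1:Ltr) = 1) = True by simp, show ((0:Ltr) = 0) = True by simp, show ((1:Ltr) = 1) = True by simp,
      if_true, if_false, zmul, omul, mulz, mulo, eH, ellt, cc1, cc2, cc3,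
      show ((0:Ltr) = 0) = True by simp, and_true, and_false, true_and, false_and,
      if_true, if_false, one_mul, mul_one, neg_mul, mul_neg, neg_neg, smul_neg, neg_smul,
      mul_add, mul_sub, add_mul, sub_mul, smul_add, smul_sub, smul_smul,
      mul_smul_comm, smul_mul_assoc, mul_assoc, one_smul, neg_add, neg_sub] <;>
  generalize eps p = ep at hep ⊢ <;> generalize eps q = eq at heq ⊢ <;>
  match_scalars <;>
  first
    | linear_combination (eq * eq) * hep + heq
    | linear_combination -((eq * eq) * hep) - heq
    | linear_combination hep
    | linear_combination -hep
    | linear_combination heq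
    | linear_combination -heq
    | ring
lemma keyD (p q : List Ltr) :
    (eps p * eps q) • Dm p q = -(starW p q * (Xh + Yh)) := by
  generalize hn : p.length + q.length = n
  induction n using Nat.strong_induction_on generalizing p q with
  | _ n ih =>
    cases p with
    | nil =>
      cases q with
      | nil => exact keyD_nil_nil
      | cons b q => exact keyD_nil_cons b q
    | cons a p =>
      cases q with
      | nil => exact keyD_cons_nil a p
      | cons b q =>
        subst hn
        refine keyD_step a b p q ?_ ?_ ?_
        · exact ih _ (by simp only [List.length_cons]; omega) _ _ rfl
        · exact ih _ (by simp only [List.length_cons]; omega) _ _ rfl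
        · exact ih _ (by simp only [List.length_cons]; omega) _ _ rfl

lemma keyW (p q : List Ltr) :
    mst (wrd p * (Xh + Yh)) (wrd q * (Xh + Yh)) = -(starW p q * (Xh + Yh)) := by
  rw [mst_expand, keyD]

theorem stmt6' (w₁ w₂ : H) :
    mst (w₁ * (Xh + Yh)) (w₂ * (Xh + Yh)) = -(_root_.star w₁ w₂ * (Xh + Yh)) := by
  induction w₁ using MonoidAlgebra.induction_linear with
  | zero => simp [mst_zero_left, star_zero_left]
  | add f f' hf hf' =>
      rw [add_mul, mst_add_left, hf, hf', star_add_left, add_mul, neg_add]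
  | single a c =>
    induction w₂ using MonoidAlgebra.induction_linear with
    | zero => simp [mst_zero_right, star_zero_right]
    | add g g' hg hg' =>
        rw [add_mul, mst_add_right, hg, hg', star_add_right, add_mul, neg_add]
    | single b d =>
        have ha : (MonoidAlgebra.single a c : H) = c • wrd a.toList := by
          rw [wrd_toList]; simp [Finsupp.smul_single']
        have hb : (MonoidAlgebra.single b d : H) = d • wrd b.toList := by
          rw [wrd_toList]; simp [Finsupp.smul_single']
        rw [star_single_single, ha, hb, smul_mul_assoc, smul_mul_assoc,
          mst_smul_left, mst_smul_right, keyW, smul_smul, smul_neg, smul_mul_assoc]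
/-- With `z = x + y`, for all `w₁, w₂ ∈ 𝔥`:
`w₁z ⊛̃ w₂z = -(w₁ * w₂)z`. -/
theorem stmt6 (w₁ w₂ : H) :
    mst (w₁ * (Xh + Yh)) (w₂ * (Xh + Yh)) = -(star w₁ w₂ * (Xh + Yh)) := by
  exact stmt6' w₁ w₂
end

section
/- For every m ≥ 0 and w ∈ 𝔥, one has σ̄_m(w) = Σ_{j=0}^{m} f_j(σ_{m-j}(w)), where σ̄_m = τ ∘ σ_m ∘ τ. -/
open scoped BigOperators

/-- `dn n w = yⁿ ⋄ w` where `⋄` is the bilinear map with `1⋄w = w⋄1 = w`,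
`yw₁ ⋄ yw₂ = y(yw₁ ⋄ w₂) - y(w₁ ⋄ xw₂)` and `yw₁ ⋄ xw₂ = x(yw₁ ⋄ w₂) + y(w₁ ⋄ xw₂)`. -/
noncomputable def dn : ℕ → List Ltr → H
  | 0, u => wrd u
  | n + 1, [] => wrd (List.replicate (n + 1) 1)
  | n + 1, a :: u =>
      if a = 0 then Xh * dn (n + 1) u + Yh * dn n (a :: u)
      else Yh * dn (n + 1) u - Yh * dn n ((0 : Ltr) :: u)
termination_by n u => (n, u.length)

/-- `dia n f = yⁿ ⋄ f`, extended linearly. -/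
noncomputable def dia (n : ℕ) (f : H) : H := f.coeff.sum fun u c => c • dn n u.toList

/-- `f_n : 𝔥 → 𝔥` for `n ∈ ℤ`: `f_n = 0` for `n < 0`, `f₀ = id`, and
`f_n(w) = yⁿ ⋄ w - (y^{n-1} ⋄ w)y` for `n ≥ 1`. -/
noncomputable def fZ (n : ℤ) (f : H) : H :=
  if n < 0 then 0 else if n = 0 then f else dia n.toNat f - dia (n.toNat - 1) f * Yh

abbrev PS := PowerSeries H

/-- The ring homomorphism `σ : 𝔥 → 𝔥[[T]]` with `σ(x) = x` and `σ(y) = y(1-xT)⁻¹`. -/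
noncomputable def sigmaH : H →ₐ[ℚ] PS :=
  MonoidAlgebra.lift ℚ PS (FreeMonoid Ltr)
    (FreeMonoid.lift fun a =>
      if a = 0 then PowerSeries.C Xh else PowerSeries.mk fun n => Yh * Xh ^ n)

/-- `σ_m`, the coefficient of `T^m` in `σ`. -/
noncomputable def sigm (m : ℕ) (f : H) : H := PowerSeries.coeff m (sigmaH f)

/-- The anti-automorphism `τ` with `τ(x) = y`, `τ(y) = x`. -/
noncomputable def tauH (f : H) : H :=
  MonoidAlgebra.ofCoeff <| Finsupp.mapDomain
    (fun l => FreeMonoid.ofList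
      (((FreeMonoid.toList l).reverse).map fun a => if a = 0 then (1 : Ltr) else 0)) f.coeff

-- ===== basics =====
lemma wrd_single (l : List Ltr) : wrd l = MonoidAlgebra.single (FreeMonoid.ofList l) (1:ℚ) := rfl
lemma wrd_append (l₁ l₂ : List Ltr) : wrd (l₁ ++ l₂) = wrd l₁ * wrd l₂ := by
  unfold wrd; rw [← map_mul]; rfl
lemma wrd_cons (a : Ltr) (l : List Ltr) : wrd (a :: l) = wrd [a] * wrd l := wrd_append [a] l


lemma H_induction {p : H → Prop} (f : H) (h0 : p 0)
    (hadd : ∀ f g : H, p f → p g → p (f + g))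
    (hs : ∀ (l : List Ltr) (c : ℚ), p (c • wrd l)) : p f := by
  induction f using MonoidAlgebra.induction_linear with
  | zero => exact h0
  | add f g h1 h2 => exact hadd f g h1 h2
  | single a b =>
    have : MonoidAlgebra.single a b = b • wrd a.toList := by
      rw [wrd_single, FreeMonoid.ofList_toList, MonoidAlgebra.smul_single, smul_eq_mul, mul_one]
    rw [this]; exact hs a.toList b

lemma Xh_pow (n : ℕ) : Xh ^ n = wrd (List.replicate n 0) := by
  induction n with
  | zero => rfl
  | succ k ih =>
    rw [pow_succ, ih]; show wrd _ * wrd [0] = _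
    rw [← wrd_append]; congr 1; simp [List.replicate_succ']
lemma Yh_pow (n : ℕ) : Yh ^ n = wrd (List.replicate n 1) := by
  induction n with
  | zero => rfl
  | succ k ih =>
    rw [pow_succ, ih]; show wrd _ * wrd [1] = _
    rw [← wrd_append]; congr 1; simp [List.replicate_succ']

def swl (a : Ltr) : Ltr := if a = 0 then 1 else 0
lemma tauH_single (g : FreeMonoid Ltr) (c : ℚ) :
    tauH (MonoidAlgebra.single g c) = MonoidAlgebra.single (FreeMonoid.ofList ((FreeMonoid.toList g).reverse.map swl)) c :=
  congrArg MonoidAlgebra.ofCoeff Finsupp.mapDomain_single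
lemma tauH_add (f g : H) : tauH (f + g) = tauH f + tauH g := congrArg MonoidAlgebra.ofCoeff Finsupp.mapDomain_add
lemma tauH_smul (c : ℚ) (f : H) : tauH (c • f) = c • tauH f := congrArg MonoidAlgebra.ofCoeff (Finsupp.mapDomain_smul c f.coeff)
lemma tauH_wrd (l : List Ltr) : tauH (wrd l) = wrd (l.reverse.map swl) := by
  rw [wrd_single, tauH_single]; rfl
lemma tauH_mul (f g : H) : tauH (f * g) = tauH g * tauH f := by
  induction f using MonoidAlgebra.induction_linear with
  | zero => simp [tauH, Finsupp.mapDomain_zero]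
  | add f₁ f₂ h1 h2 => rw [add_mul, tauH_add, h1, h2, tauH_add, mul_add]
  | single a b =>
    induction g using MonoidAlgebra.induction_linear with
    | zero => simp [tauH, Finsupp.mapDomain_zero]
    | add g₁ g₂ h1 h2 => rw [mul_add, tauH_add, h1, h2, tauH_add, add_mul]
    | single a' b' =>
      show tauH (MonoidAlgebra.single a b * MonoidAlgebra.single a' b') = _
      rw [MonoidAlgebra.single_mul_single, tauH_single, tauH_single, tauH_single,
        MonoidAlgebra.single_mul_single]
      congr 1
      · show FreeMonoid.ofList (((a*a').toList).reverse.map swl) =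
          FreeMonoid.ofList ((a'.toList).reverse.map swl) * FreeMonoid.ofList ((a.toList).reverse.map swl)
        rw [← FreeMonoid.ofList_append]
        congr 1
        show ((a.toList ++ a'.toList).reverse.map swl) = _
        rw [List.reverse_append, List.map_append]
      · exact mul_comm b b'
lemma tauH_one : tauH 1 = 1 := by
  have := tauH_wrd []; exact this
-- ===== dia =====
lemma dia_single (g : FreeMonoid Ltr) (c : ℚ) (n : ℕ) :
    dia n (MonoidAlgebra.single g c) = c • dn n g.toList := by
  unfold dia; rw [MonoidAlgebra.coeff_single]; exact Finsupp.sum_single_index (by simp)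
lemma dia_wrd (n : ℕ) (l : List Ltr) : dia n (wrd l) = dn n l := by
  rw [wrd_single, dia_single, one_smul, FreeMonoid.toList_ofList]
lemma dia_zero_right (n : ℕ) : dia n 0 = 0 := by unfold dia; simp
lemma dia_add (n : ℕ) (f g : H) : dia n (f + g) = dia n f + dia n g := by
  classical
  unfold dia
  rw [MonoidAlgebra.coeff_add]
  exact Finsupp.sum_add_index (by simp) (by intros; rw [add_smul])
lemma dia_smul (n : ℕ) (c : ℚ) (f : H) : dia n (c • f) = c • dia n f := by
  unfold dia
  rw [MonoidAlgebra.coeff_smul, Finsupp.sum_smul_index (by simp), Finsupp.smul_sum]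
  simp [mul_smul]
lemma dia_zero (f : H) : dia 0 f = f := by
  induction f using MonoidAlgebra.induction_linear with
  | zero => exact dia_zero_right 0
  | add f g h1 h2 => rw [dia_add, h1, h2]
  | single a b =>
    rw [dia_single]
    show b • dn 0 a.toList = _
    rw [dn]
    show b • MonoidAlgebra.single (FreeMonoid.ofList a.toList) (1:ℚ) = _
    rw [MonoidAlgebra.smul_single, smul_eq_mul, mul_one, FreeMonoid.ofList_toList]
lemma dia_sum {α : Type*} (n : ℕ) (s : Finset α) (f : α → H) :
    dia n (∑ i ∈ s, f i) = ∑ i ∈ s, dia n (f i) := by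
  classical
  induction s using Finset.induction_on with
  | empty => simp [dia_zero_right]
  | insert _ _ h ih => rw [Finset.sum_insert h, dia_add, ih, Finset.sum_insert h]

lemma Xh_mul_single (g : FreeMonoid Ltr) (c : ℚ) :
    Xh * MonoidAlgebra.single g c = MonoidAlgebra.single (FreeMonoid.ofList ((0:Ltr) :: g.toList)) c := by
  show MonoidAlgebra.single (FreeMonoid.ofList [0]) (1:ℚ) * MonoidAlgebra.single g c = _
  rw [MonoidAlgebra.single_mul_single]; congr 1; exact one_mul c
lemma Yh_mul_single (g : FreeMonoid Ltr) (c : ℚ) :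
    Yh * MonoidAlgebra.single g c = MonoidAlgebra.single (FreeMonoid.ofList ((1:Ltr) :: g.toList)) c := by
  show MonoidAlgebra.single (FreeMonoid.ofList [1]) (1:ℚ) * MonoidAlgebra.single g c = _
  rw [MonoidAlgebra.single_mul_single]; congr 1; exact one_mul c

lemma Xh_mul_wrd (l : List Ltr) : Xh * wrd l = wrd ((0:Ltr) :: l) := (wrd_cons 0 l).symm
lemma Yh_mul_wrd (l : List Ltr) : Yh * wrd l = wrd ((1:Ltr) :: l) := (wrd_cons 1 l).symm

lemma dia_X_mul (n : ℕ) (f : H) :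
    dia (n+1) (Xh * f) = Xh * dia (n+1) f + Yh * dia n (Xh * f) := by
  induction f using H_induction with
  | h0 => simp [dia_zero_right]
  | hadd f g h1 h2 =>
    simp only [mul_add, dia_add, h1, h2]; abel
  | hs l c =>
    simp only [mul_smul_comm, dia_smul]
    rw [Xh_mul_wrd, dia_wrd, dia_wrd, dia_wrd,
      dn, if_pos rfl, smul_add]
lemma dia_Y_mul (n : ℕ) (f : H) :
    dia (n+1) (Yh * f) = Yh * dia (n+1) f - Yh * dia n (Xh * f) := by
  induction f using H_induction with
  | h0 => simp [dia_zero_right]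
  | hadd f g h1 h2 =>
    simp only [mul_add, dia_add, h1, h2]; abel
  | hs l c =>
    simp only [mul_smul_comm, dia_smul]
    rw [Yh_mul_wrd, Xh_mul_wrd, dia_wrd, dia_wrd, dia_wrd,
      dn, if_neg (by simp [Fin.ext_iff]), smul_sub]

-- ===== fN =====
noncomputable def fN (n : ℕ) (f : H) : H := fZ (n : ℤ) f
lemma fN_eq (n : ℕ) (f : H) : fZ (n : ℤ) f = fN n f := rfl
lemma fN_zero (f : H) : fN 0 f = f := by unfold fN fZ; norm_num
lemma fN_succ (n : ℕ) (f : H) : fN (n+1) f = dia (n+1) f - dia n f * Yh := by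
  unfold fN fZ
  rw [if_neg (by omega), if_neg (by omega)]
  simp
lemma fN_add (n : ℕ) (f g : H) : fN n (f + g) = fN n f + fN n g := by
  cases n with
  | zero => rw [fN_zero, fN_zero, fN_zero]
  | succ k => rw [fN_succ, fN_succ, fN_succ, dia_add, dia_add, add_mul]; abel
lemma fN_smul (n : ℕ) (c : ℚ) (f : H) : fN n (c • f) = c • fN n f := by
  cases n with
  | zero => rw [fN_zero, fN_zero]
  | succ k => rw [fN_succ, fN_succ, dia_smul, dia_smul, smul_sub, smul_mul_assoc]
lemma fN_zero_right (n : ℕ) : fN n 0 = 0 := by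
  cases n with
  | zero => rw [fN_zero]
  | succ k => rw [fN_succ]; simp [dia_zero_right]
lemma fN_sum {α : Type*} (n : ℕ) (s : Finset α) (f : α → H) :
    fN n (∑ i ∈ s, f i) = ∑ i ∈ s, fN n (f i) := by
  classical
  induction s using Finset.induction_on with
  | empty => simp [fN_zero_right]
  | insert _ _ h ih => rw [Finset.sum_insert h, fN_add, ih, Finset.sum_insert h]
-- ===== fN recursions =====
lemma fN_X_mul (n : ℕ) (v : H) :
    fN (n+1) (Xh * v) = Xh * fN (n+1) v + Yh * fN n (Xh * v) := by
  cases n with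
  | zero =>
    rw [fN_succ, fN_succ, fN_zero, dia_X_mul]
    simp only [dia_zero, mul_sub, mul_assoc]
    abel
  | succ k =>
    rw [fN_succ, fN_succ, fN_succ, dia_X_mul (k+1), dia_X_mul k]
    simp only [mul_sub, add_mul, mul_assoc]
    abel
lemma fN_Y_mul (n : ℕ) (v : H) :
    fN (n+1) (Yh * v) = Yh * fN (n+1) v - Yh * fN n (Xh * v) := by
  cases n with
  | zero =>
    rw [fN_succ, fN_succ, fN_zero, dia_Y_mul]
    simp only [dia_zero, mul_sub, mul_assoc]
    abel
  | succ k =>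
    rw [fN_succ, fN_succ, fN_succ, dia_Y_mul (k+1), dia_Y_mul k]
    simp only [mul_sub, sub_mul, mul_assoc]
    abel
lemma fN_X_expand (n : ℕ) (v : H) :
    fN n (Xh * v) = ∑ k ∈ Finset.range (n+1), Yh ^ k * Xh * fN (n - k) v := by
  induction n with
  | zero => simp [fN_zero]
  | succ m ih =>
    rw [fN_X_mul, ih, Finset.mul_sum, Finset.sum_range_succ' (fun k => Yh ^ k * Xh * fN (m + 1 - k) v)]
    simp only [Nat.sub_zero, pow_zero, one_mul]
    rw [add_comm]
    congr 1
    apply Finset.sum_congr rfl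
    intro k hk
    have : m + 1 - (k + 1) = m - k := by omega
    rw [this, pow_succ']
    noncomm_ring
-- ===== sigm =====
lemma sigmaH_X : sigmaH Xh = PowerSeries.C Xh := by
  unfold sigmaH Xh wrd
  rw [MonoidAlgebra.lift_of]
  show (FreeMonoid.lift _) (FreeMonoid.of (0:Ltr)) = _
  rw [FreeMonoid.lift_eval_of]
  simp
lemma sigmaH_Y : sigmaH Yh = PowerSeries.mk fun n => Yh * Xh ^ n := by
  unfold sigmaH Yh wrd
  rw [MonoidAlgebra.lift_of]
  show (FreeMonoid.lift _) (FreeMonoid.of (1:Ltr)) = _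
  rw [FreeMonoid.lift_eval_of]
  rw [if_neg (by simp [Fin.ext_iff])]
lemma sigm_add (m : ℕ) (f g : H) : sigm m (f + g) = sigm m f + sigm m g := by
  unfold sigm; rw [map_add, map_add]
lemma sigm_smul (m : ℕ) (c : ℚ) (f : H) : sigm m (c • f) = c • sigm m f := by
  unfold sigm
  rw [map_smul]
  exact LinearMap.map_smul_of_tower (PowerSeries.coeff m) c (sigmaH f)
lemma sigm_zero_right (m : ℕ) : sigm m 0 = 0 := by unfold sigm; simp
lemma sigm_one (m : ℕ) : sigm m 1 = if m = 0 then 1 else 0 := by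
  unfold sigm; rw [map_one, PowerSeries.coeff_one]
lemma sigm_X_mul (m : ℕ) (f : H) : sigm m (Xh * f) = Xh * sigm m f := by
  unfold sigm
  rw [map_mul, sigmaH_X]
  exact PowerSeries.coeff_C_mul m (sigmaH f) Xh
lemma sigm_mul_X (m : ℕ) (f : H) : sigm m (f * Xh) = sigm m f * Xh := by
  unfold sigm
  rw [map_mul, sigmaH_X]
  exact PowerSeries.coeff_mul_C m (sigmaH f) Xh
lemma sigm_Y_mul (m : ℕ) (f : H) :
    sigm m (Yh * f) = ∑ k ∈ Finset.range (m+1), Yh * Xh ^ k * sigm (m - k) f := by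
  unfold sigm
  rw [map_mul, sigmaH_Y, PowerSeries.coeff_mul,
    Finset.Nat.sum_antidiagonal_eq_sum_range_succ_mk]
  simp [PowerSeries.coeff_mk]
lemma sigm_mul_Y (m : ℕ) (f : H) :
    sigm m (f * Yh) = ∑ k ∈ Finset.range (m+1), sigm k f * (Yh * Xh ^ (m - k)) := by
  unfold sigm
  rw [map_mul, sigmaH_Y, PowerSeries.coeff_mul,
    Finset.Nat.sum_antidiagonal_eq_sum_range_succ_mk]
  simp [PowerSeries.coeff_mk]

-- tau of Y X^l
lemma tauH_YX (l : ℕ) : tauH (Yh * Xh ^ l) = Yh ^ l * Xh := by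
  rw [Xh_pow, Yh_mul_wrd, tauH_wrd]
  have h : (((1:Ltr) :: List.replicate l 0).reverse.map swl) = List.replicate l 1 ++ [0] := by
    simp [List.reverse_cons, List.map_replicate, swl]
  rw [h, wrd_append, ← Yh_pow]
  rfl
-- ===== misc =====
lemma tauH_zero : tauH 0 = 0 := congrArg MonoidAlgebra.ofCoeff Finsupp.mapDomain_zero
lemma tauH_finset_sum {α : Type*} (s : Finset α) (f : α → H) :
    tauH (∑ i ∈ s, f i) = ∑ i ∈ s, tauH (f i) := by
  classical
  induction s using Finset.induction_on with
  | empty => simp [tauH_zero]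
  | insert _ _ h ih => rw [Finset.sum_insert h, tauH_add, ih, Finset.sum_insert h]
lemma tauH_X : tauH Xh = Yh := by
  show tauH (wrd [0]) = Yh
  rw [tauH_wrd]; rfl
lemma tauH_Y : tauH Yh = Xh := by
  show tauH (wrd [1]) = Xh
  rw [tauH_wrd]; rfl
lemma dia_one (n : ℕ) : dia n 1 = Yh ^ n := by
  cases n with
  | zero => rw [dia_zero, pow_zero]
  | succ k =>
    rw [← wrd_nil, dia_wrd, dn, Yh_pow]
lemma fN_one_succ (k : ℕ) : fN (k+1) 1 = 0 := by
  rw [fN_succ, dia_one, dia_one, ← pow_succ, sub_self]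

-- ===== sum lemmas =====
lemma swapsum (T : ℕ → ℕ → H) (m : ℕ) :
    ∑ j ∈ Finset.range (m+1), ∑ k ∈ Finset.range (j+1), T j k
    = ∑ k ∈ Finset.range (m+1), ∑ i ∈ Finset.range (m-k+1), T (k+i) k := by
  rw [Finset.sum_comm' (t' := Finset.range (m+1)) (s' := fun k => Finset.Ico k (m+1))
    (by intro x y; simp only [Finset.mem_range, Finset.mem_Ico]; omega)]
  apply Finset.sum_congr rfl
  intro k hk
  rw [Finset.sum_Ico_eq_sum_range]
  apply Finset.sum_congr
  · congr 1
    simp only [Finset.mem_range] at hk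
    omega
  · intro i _; rfl

lemma telescope (G : ℕ → ℕ → H) (m : ℕ) :
    (∑ j ∈ Finset.range m, ∑ i ∈ Finset.range (m-j), (G (j+1) i - G j (i+1)))
      + ∑ i ∈ Finset.range (m+1), G 0 i
    = ∑ j ∈ Finset.range (m+1), G j 0 := by
  have hA : ∑ j ∈ Finset.range (m+1), ∑ i ∈ Finset.range (m-j+1), G j i
      = (∑ j ∈ Finset.range m, ∑ i ∈ Finset.range (m-j), G (j+1) i)
        + ∑ i ∈ Finset.range (m+1), G 0 i := by
    rw [Finset.sum_range_succ' (fun j => ∑ i ∈ Finset.range (m-j+1), G j i) m]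
    simp only [Nat.sub_zero]
    congr 1
    apply Finset.sum_congr rfl
    intro j hj
    apply Finset.sum_congr
    · congr 1
      simp only [Finset.mem_range] at hj
      omega
    · intro i _; rfl
  have hB : ∀ j ∈ Finset.range m,
      ∑ i ∈ Finset.range (m-j), G j (i+1)
        = ∑ i ∈ Finset.range (m-j+1), G j i - G j 0 := by
    intro j _
    rw [Finset.sum_range_succ' (fun i => G j i) (m-j)]
    abel
  rw [Finset.sum_range_succ (fun j => ∑ i ∈ Finset.range (m-j+1), G j i) m] at hA
  have hmm : Finset.range (m - m + 1) = Finset.range 1 := by congr 1; omega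
  rw [hmm, Finset.sum_range_one] at hA
  simp only [Finset.sum_sub_distrib]
  rw [Finset.sum_congr rfl hB]
  simp only [Finset.sum_sub_distrib]
  rw [Finset.sum_range_succ (fun j => G j 0) m]
  have hA' : ∑ j ∈ Finset.range m, ∑ i ∈ Finset.range (m-j+1), G j i
      = (∑ j ∈ Finset.range m, ∑ i ∈ Finset.range (m-j), G (j+1) i)
        + (∑ i ∈ Finset.range (m+1), G 0 i) - G m 0 := by
    rw [← hA]; abel
  rw [hA']
  abel
-- ===== main =====
lemma key (l : List Ltr) : ∀ m : ℕ,
    tauH (sigm m (tauH (wrd l))) = ∑ j ∈ Finset.range (m+1), fN j (sigm (m-j) (wrd l)) := by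
  induction l with
  | nil =>
    intro m
    rw [wrd_nil, tauH_one]
    cases m with
    | zero => simp [sigm_one, fN_zero, tauH_one]
    | succ n =>
      rw [sigm_one, if_neg (Nat.succ_ne_zero n), tauH_zero]
      symm
      rw [Finset.sum_range_succ]
      have h1 : ∀ j ∈ Finset.range (n+1), fN j (sigm (n+1-j) 1) = 0 := by
        intro j hj
        simp only [Finset.mem_range] at hj
        rw [sigm_one, if_neg (by omega), fN_zero_right]
      rw [Finset.sum_eq_zero h1, zero_add]
      have e : n+1-(n+1) = 0 := by omega
      rw [e, sigm_one, if_pos rfl, fN_one_succ]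
  | cons a l ih =>
    intro m
    fin_cases a
    · -- x-case
      show tauH (sigm m (tauH (wrd ((0:Ltr) :: l)))) = ∑ j ∈ Finset.range (m+1), fN j (sigm (m-j) (wrd ((0:Ltr) :: l)))
      rw [← Xh_mul_wrd]
      rw [tauH_mul, tauH_X, sigm_mul_Y, tauH_finset_sum]
      have hL : ∀ k ∈ Finset.range (m+1),
          tauH (sigm k (tauH (wrd l)) * (Yh * Xh ^ (m-k)))
            = Yh ^ (m-k) * Xh * ∑ j ∈ Finset.range (k+1), fN j (sigm (k-j) (wrd l)) := by
        intro k _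
        rw [tauH_mul, tauH_YX, ih k]
      rw [Finset.sum_congr rfl hL]
      have hR : ∀ j ∈ Finset.range (m+1),
          fN j (sigm (m-j) (Xh * wrd l))
            = ∑ k ∈ Finset.range (j+1), Yh ^ k * Xh * fN (j-k) (sigm (m-j) (wrd l)) := by
        intro j _
        rw [sigm_X_mul, fN_X_expand]
      rw [Finset.sum_congr rfl hR,
        swapsum (fun j k => Yh ^ k * Xh * fN (j-k) (sigm (m-j) (wrd l))) m]
      rw [← Finset.sum_range_reflect
        (fun k => Yh ^ (m-k) * Xh * ∑ j ∈ Finset.range (k+1), fN j (sigm (k-j) (wrd l))) (m+1)]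
      apply Finset.sum_congr rfl
      intro k hk
      simp only [Finset.mem_range] at hk
      simp only [show m + 1 - 1 - k = m - k from by omega,
        show m - (m - k) = k from by omega, Finset.mul_sum]
      apply Finset.sum_congr rfl
      intro i _
      simp only [show k + i - k = i from by omega, show m - (k + i) = m - k - i from by omega,
        mul_assoc]
    · -- y-case
      show tauH (sigm m (tauH (wrd ((1:Ltr) :: l)))) = ∑ j ∈ Finset.range (m+1), fN j (sigm (m-j) (wrd ((1:Ltr) :: l)))
      rw [← Yh_mul_wrd]
      rw [tauH_mul, tauH_Y, sigm_mul_X, tauH_mul, tauH_X, ih m]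
      have hR : ∀ j ∈ Finset.range (m+1),
          fN j (sigm (m-j) (Yh * wrd l))
            = ∑ i ∈ Finset.range (m-j+1), fN j (Yh * (Xh ^ i * sigm (m-j-i) (wrd l))) := by
        intro j _
        rw [sigm_Y_mul, fN_sum]
        apply Finset.sum_congr rfl
        intro i _
        rw [mul_assoc]
      rw [Finset.sum_congr rfl hR]
      rw [Finset.sum_range_succ'
        (fun j => ∑ i ∈ Finset.range (m-j+1), fN j (Yh * (Xh ^ i * sigm (m-j-i) (wrd l)))) m]
      have h2 : ∀ j ∈ Finset.range m,
          ∑ i ∈ Finset.range (m-(j+1)+1), fN (j+1) (Yh * (Xh ^ i * sigm (m-(j+1)-i) (wrd l)))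
            = ∑ i ∈ Finset.range (m-j),
                ((Yh * fN (j+1) (Xh ^ i * sigm (m-(j+1)-i) (wrd l)))
                  - (Yh * fN j (Xh ^ (i+1) * sigm (m-j-(i+1)) (wrd l)))) := by
        intro j hj
        simp only [Finset.mem_range] at hj
        rw [show m - (j+1) + 1 = m - j from by omega]
        apply Finset.sum_congr rfl
        intro i hi
        rw [fN_Y_mul]
        congr 2
        rw [show m - j - (i+1) = m - (j+1) - i from by omega, pow_succ', mul_assoc]
      rw [Finset.sum_congr rfl h2]
      have h3 : ∑ i ∈ Finset.range (m-0+1), fN 0 (Yh * (Xh ^ i * sigm (m-0-i) (wrd l)))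
          = ∑ i ∈ Finset.range (m+1), Yh * fN 0 (Xh ^ i * sigm (m-0-i) (wrd l)) := by
        simp only [fN_zero]; rfl
      rw [h3]
      have tele := telescope (fun j i => Yh * fN j (Xh ^ i * sigm (m-j-i) (wrd l))) m
      rw [tele, Finset.mul_sum]
      apply Finset.sum_congr rfl
      intro j _
      simp only [pow_zero, one_mul, Nat.sub_zero]

/-- For `m ≥ 0` and `w ∈ 𝔥`:
`σ̄_m(w) = Σ_{j=0}^{m} f_j(σ_{m-j}(w))`, where `σ̄_m = τ ∘ σ_m ∘ τ`. -/
theorem stmt9 (m : ℕ) (w : H) :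
    tauH (sigm m (tauH w)) = ∑ j ∈ Finset.range (m + 1), fZ (j : ℤ) (sigm (m - j) w) := by
  induction w using H_induction with
  | h0 =>
    simp only [tauH_zero, sigm_zero_right, fN_eq, fN_zero_right]
    simp
  | hadd f g h1 h2 =>
    simp only [tauH_add, sigm_add, fN_eq, fN_add, h1, h2, Finset.sum_add_distrib]
  | hs l c =>
    simp only [tauH_smul, sigm_smul, fN_eq, fN_smul, key l m, Finset.smul_sum]
end
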